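/- Let n ≥ 1, let h_1, …, h_n ∈ ℝ^{n−1} be a Hadamard simplex, and let p ∈ [1,∞). Let u and v be linearly independent unit vectors in a strictly convex 2-dimensional normed space X. Suppose x = (x_1, …, x_{n−1}) ∈ X ⊕_p ⋯ ⊕_p X (n−1 summands) has the same distance to each point of {h_i ⊗ u : i ∈ [n]} and also the same distance to each point of {h_i ⊗ v : i ∈ [n]}. Then x = 0. -/

import Mathlib

/-- An `n × n` real matrix is a Hadamard matrix if every entry is `±1` and
`H * Hᵀ = n • 1`. -/
def IsHadamardMatrix {n : ℕ} (H : Matrix (Fin n) (Fin n) ℝ) : Prop :=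
  (∀ i j, H i j = 1 ∨ H i j = -1) ∧ H * H.transpose = (n : ℝ) • 1

section Plane

variable {X : Type*} [NormedAddCommGroup X] [NormedSpace ℝ X] [StrictConvexSpace ℝ X]

/-- Monotonicity lemma in a strictly convex space: if `a, b` are unit vectors,
`b` is not a multiple of `a`, and `x = A • a + B • b` with `A > 0 > B`, then
`x` is strictly closer to `a` than to `b`. -/
lemma ml_lemma (a b : X) (ha : ‖a‖ = 1) (hb : ‖b‖ = 1)
    (hba : ∀ c : ℝ, b ≠ c • a)
    (A B : ℝ) (hA : 0 < A) (hB : B < 0)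
    (x : X) (hx : x = A • a + B • b) :
    ‖a - x‖ < ‖b - x‖ := by
  have h1B : (0:ℝ) < 1 - B := by linarith
  have ha0 : a ≠ 0 := by intro h; rw [h] at ha; simp at ha
  have hb0 : b ≠ 0 := by intro h; rw [h] at hb; simp at hb
  set ρ : ℝ := A / (1 - B) with hρdef
  have hρpos : 0 < ρ := div_pos hA h1B
  set t : ℝ := -B / (1 - B) with htdef
  have ht0 : 0 < t := div_pos (by linarith) h1B
  have ht1 : t < 1 := by rw [div_lt_one h1B]; linarith
  set z : X := ρ • a with hzdef
  have hB1 : (1:ℝ) - B ≠ 0 := ne_of_gt h1B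
  have hzx : z - x = t • (b - x) := by
    rw [hzdef, hx, hρdef, htdef]
    match_scalars <;> field_simp <;> try ring
  have hbz : b - z = (1 - t) • (b - x) := by
    rw [hzdef, hx, hρdef, htdef]
    match_scalars <;> field_simp <;> try ring
  have hnzx : ‖z - x‖ = t * ‖b - x‖ := by
    rw [hzx, norm_smul, Real.norm_of_nonneg ht0.le]
  have hnbz : ‖b - z‖ = (1 - t) * ‖b - x‖ := by
    rw [hbz, norm_smul, Real.norm_of_nonneg (by linarith)]
  have hsum : ‖b - x‖ = ‖b - z‖ + ‖z - x‖ := by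
    rw [hnzx, hnbz]; ring
  have haz : ‖a - z‖ = |1 - ρ| := by
    have e : a - z = (1 - ρ) • a := by
      rw [hzdef, sub_smul, one_smul]
    rw [e, norm_smul, ha, mul_one, Real.norm_eq_abs]
  have htri : ‖a - x‖ ≤ ‖a - z‖ + ‖z - x‖ := by
    have : a - x = (a - z) + (z - x) := by abel
    rw [this]; exact norm_add_le _ _
  have hnz : ‖z‖ = ρ := by
    rw [hzdef, norm_smul, ha, mul_one, Real.norm_of_nonneg hρpos.le]
  rcases eq_or_ne ρ 1 with hρ1 | hρ1
  · -- z = a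
    have hza : z = a := by rw [hzdef, hρ1, one_smul]
    have hbapos : 0 < ‖b - a‖ := by
      rw [norm_pos_iff, sub_ne_zero]
      intro h; exact hba 1 (by rw [h, one_smul])
    have : ‖b - x‖ = ‖b - a‖ + ‖a - x‖ := by
      rw [hsum, hza]
    have h2 : ‖a - x‖ ≤ ‖z - x‖ := by rw [hza]
    linarith
  · have hkey : |1 - ρ| < ‖b - z‖ := by
      rcases lt_or_gt_of_ne hρ1 with hlt | hgt
      · -- ρ < 1
        have habs : |1 - ρ| = 1 - ρ := abs_of_pos (by linarith)
        rw [habs]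
        rcases lt_or_ge (1 - ρ) ‖b - z‖ with h | hcon
        · exact h
        have hge : 1 - ρ ≤ ‖b - z‖ := by
          have h := norm_add_le (b - z) z
          rw [sub_add_cancel, hb, hnz] at h
          linarith
        have heq : ‖b - z‖ = 1 - ρ := le_antisymm hcon hge
        exfalso
        have hray : SameRay ℝ (b - z) z := by
          by_contra hnot
          have h := norm_add_lt_of_not_sameRay hnot
          rw [sub_add_cancel, hb, hnz, heq] at h
          linarith
        have hbz0 : b - z ≠ 0 := by
          rw [sub_ne_zero]
          intro h; exact hba ρ (by rw [h, hzdef])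
        have hz0 : z ≠ 0 := by
          rw [hzdef]; exact smul_ne_zero (ne_of_gt hρpos) ha0
        obtain ⟨r, s, hr, hs, hrs⟩ := hray.exists_pos hbz0 hz0
        apply hba ((1 + s / r) * ρ)
        have h1 : b - z = (s / r) • z := by
          rw [div_eq_inv_mul, ← smul_smul, ← hrs, smul_smul,
            inv_mul_cancel₀ (ne_of_gt hr), one_smul]
        have h2 : b = (1 + s / r) • z := by
          have h3 := eq_add_of_sub_eq h1
          rw [h3, add_smul, one_smul]; abel
        rw [h2, hzdef, smul_smul]
      · -- ρ > 1
        have habs : |1 - ρ| = ρ - 1 := by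
          rw [abs_of_neg (by linarith)]; ring
        rw [habs]
        rcases lt_or_ge (ρ - 1) ‖b - z‖ with h | hcon
        · exact h
        have hge : ρ - 1 ≤ ‖b - z‖ := by
          have h := norm_add_le (z - b) b
          rw [sub_add_cancel, hb, hnz, norm_sub_rev] at h
          linarith
        have heq : ‖b - z‖ = ρ - 1 := le_antisymm hcon hge
        exfalso
        have hray : SameRay ℝ (z - b) b := by
          by_contra hnot
          have h := norm_add_lt_of_not_sameRay hnot
          rw [sub_add_cancel, hb, hnz, norm_sub_rev, heq] at h
          linarith
        have hzb0 : z - b ≠ 0 := by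
          rw [sub_ne_zero]
          intro h; exact hba ρ (by rw [← h, hzdef])
        obtain ⟨r, s, hr, hs, hrs⟩ := hray.exists_pos hzb0 hb0
        have hpos : (0:ℝ) < 1 + s / r := by positivity
        apply hba ((1 + s / r)⁻¹ * ρ)
        have h1 : z - b = (s / r) • b := by
          rw [div_eq_inv_mul, ← smul_smul, ← hrs, smul_smul,
            inv_mul_cancel₀ (ne_of_gt hr), one_smul]
        have h2 : z = (1 + s / r) • b := by
          have h3 := eq_add_of_sub_eq h1
          rw [h3, add_smul, one_smul]; abel
        have h3 : b = (1 + s / r)⁻¹ • z := by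
          rw [h2, smul_smul, inv_mul_cancel₀ (ne_of_gt hpos), one_smul]
        rw [h3, hzdef, smul_smul]
    calc ‖a - x‖ ≤ |1 - ρ| + ‖z - x‖ := by rw [← haz]; exact htri
      _ < ‖b - z‖ + ‖z - x‖ := by linarith
      _ = ‖b - x‖ := hsum.symm

lemma key_core (y u' v' : X) (hu' : ‖u'‖ = 1) (hv' : ‖v'‖ = 1)
    (h1 : ‖y - u'‖ = ‖y + u'‖) (h2 : ‖y - v'‖ = ‖y + v'‖)
    (hvu : ∀ c : ℝ, v' ≠ c • u') (huv : ∀ c : ℝ, u' ≠ c • v')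
    (A B : ℝ) (hA : 0 < A) (hB : B < 0) (hy : y = A • u' + B • v') : False := by
  have i1 : ‖u' - y‖ < ‖v' - y‖ := ml_lemma u' v' hu' hv' hvu A B hA hB y hy
  have i2 : ‖(-v') - y‖ < ‖(-u') - y‖ := by
    apply ml_lemma (-v') (-u') (by simpa) (by simpa) ?_ (-B) (-A)
      (by linarith) (by linarith) y ?_
    · intro c hc
      apply huv c
      rw [smul_neg] at hc
      exact neg_injective hc
    · rw [hy]; module
  have e1 : ‖(-u') - y‖ = ‖u' - y‖ := by
    have e : (-u') - y = -(y + u') := by abel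
    rw [e, norm_neg, ← h1, norm_sub_rev]
  have e2 : ‖(-v') - y‖ = ‖v' - y‖ := by
    have e : (-v') - y = -(y + v') := by abel
    rw [e, norm_neg, ← h2, norm_sub_rev]
  rw [e1, e2] at i2
  exact absurd (i1.trans i2) (lt_irrefl _)

lemma abs_eq_forces_zero {a : ℝ} (h : |a - 1| = |a + 1|) : a = 0 := by
  rcases abs_eq_abs.mp h with h' | h' <;> linarith

/-- The key planar lemma: in a strictly convex two-dimensional space, a point
equidistant from `u, -u` and from `v, -v` (with `u, v` independent unit vectors)
must be the origin. -/
lemma key_lemma (hdim : Module.finrank ℝ X = 2)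
    (u v : X) (hu : ‖u‖ = 1) (hv : ‖v‖ = 1) (huv : LinearIndependent ℝ ![u, v])
    (y : X) (h1 : ‖y - u‖ = ‖y + u‖) (h2 : ‖y - v‖ = ‖y + v‖) : y = 0 := by
  classical
  by_contra hy0
  have hcard : Fintype.card (Fin 2) = Module.finrank ℝ X := by simp [hdim]
  set Bb : Module.Basis (Fin 2) ℝ X := basisOfLinearIndependentOfCardEqFinrank huv hcard with hBbdef
  have hcoe : ⇑Bb = ![u, v] := coe_basisOfLinearIndependentOfCardEqFinrank huv hcard
  obtain ⟨a, b, hab⟩ : ∃ a b : ℝ, y = a • u + b • v := by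
    refine ⟨Bb.repr y 0, Bb.repr y 1, ?_⟩
    have hs := Bb.sum_repr y
    rw [Fin.sum_univ_two, hcoe] at hs
    simp only [Matrix.cons_val_zero, Matrix.cons_val_one, Matrix.head_cons] at hs
    exact hs.symm
  have hfin := linearIndependent_fin2.mp huv
  have hv0 : v ≠ 0 := by simpa using hfin.1
  have hunv : ∀ c : ℝ, u ≠ c • v := by
    intro c hc
    exact hfin.2 c (by simpa using hc.symm)
  have hvnu : ∀ c : ℝ, v ≠ c • u := by
    intro c hc
    rcases eq_or_ne c 0 with rfl | hc0
    · rw [zero_smul] at hc; exact hv0 hc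
    · apply hunv c⁻¹
      rw [hc, smul_smul, inv_mul_cancel₀ hc0, one_smul]
  have hbne : b ≠ 0 := by
    intro hb
    rw [hb, zero_smul, add_zero] at hab
    have e1 : y - u = (a - 1) • u := by rw [hab, sub_smul, one_smul]
    have e2 : y + u = (a + 1) • u := by rw [hab, add_smul, one_smul]
    have : |a - 1| = |a + 1| := by
      have := h1
      rw [e1, e2, norm_smul, norm_smul, hu, mul_one, mul_one,
        Real.norm_eq_abs, Real.norm_eq_abs] at this
      exact this
    have ha0 : a = 0 := abs_eq_forces_zero this
    rw [ha0, zero_smul] at hab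
    exact hy0 hab
  have hane : a ≠ 0 := by
    intro ha
    rw [ha, zero_smul, zero_add] at hab
    have e1 : y - v = (b - 1) • v := by rw [hab, sub_smul, one_smul]
    have e2 : y + v = (b + 1) • v := by rw [hab, add_smul, one_smul]
    have : |b - 1| = |b + 1| := by
      have := h2
      rw [e1, e2, norm_smul, norm_smul, hv, mul_one, mul_one,
        Real.norm_eq_abs, Real.norm_eq_abs] at this
      exact this
    have hb0 : b = 0 := abs_eq_forces_zero this
    rw [hb0, zero_smul] at hab
    exact hy0 hab
  have h1n : ‖y - (-u)‖ = ‖y + (-u)‖ := by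
    rw [sub_neg_eq_add, ← sub_eq_add_neg]; exact h1.symm
  have h2n : ‖y - (-v)‖ = ‖y + (-v)‖ := by
    rw [sub_neg_eq_add, ← sub_eq_add_neg]; exact h2.symm
  have hun : ‖(-u : X)‖ = 1 := by simpa using hu
  have hvn : ‖(-v : X)‖ = 1 := by simpa using hv
  rcases lt_or_gt_of_ne hane with haneg | hapos <;>
    rcases lt_or_gt_of_ne hbne with hbneg | hbpos
  · -- a < 0, b < 0 : u' = -u, v' = v, A = -a, B = b
    refine key_core y (-u) v hun hv h1n h2 ?_ ?_ (-a) b (by linarith) hbneg ?_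
    · intro c hc
      apply hvnu (-c)
      rw [hc, smul_neg, neg_smul]
    · intro c hc
      apply hunv (-c)
      rw [neg_smul, ← hc, neg_neg]
    · rw [hab]; module
  · -- a < 0, b > 0 : u' = -u, v' = -v, A = -a, B = -b
    refine key_core y (-u) (-v) hun hvn h1n h2n ?_ ?_ (-a) (-b) (by linarith) (by linarith) ?_
    · intro c hc
      apply hvnu c
      have : v = c • u := by
        have := neg_injective (hc.trans (by rw [smul_neg]))
        exact this
      exact this
    · intro c hc
      apply hunv c
      have := neg_injective (hc.trans (by rw [smul_neg]))
      exact this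
    · rw [hab]; module
  · -- a > 0, b < 0 : direct
    exact key_core y u v hu hv h1 h2 hvnu hunv a b hapos hbneg hab
  · -- a > 0, b > 0 : u' = u, v' = -v, A = a, B = -b
    refine key_core y u (-v) hu hvn h1 h2n ?_ ?_ a (-b) hapos (by linarith) ?_
    · intro c hc
      apply hvnu (-c)
      rw [neg_smul, ← hc, neg_neg]
    · intro c hc
      apply hunv (-c)
      rw [hc, smul_neg, neg_smul]
    · rw [hab]; module

end Plane

lemma rpow_inj_of_nonneg {a b p : ℝ} (ha : 0 ≤ a) (hb : 0 ≤ b) (hp : 0 < p)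
    (h : a ^ p = b ^ p) : a = b := by
  rcases lt_trichotomy a b with hlt | heq | hgt
  · exact absurd h (ne_of_lt (Real.rpow_lt_rpow ha hlt hp))
  · exact heq
  · exact absurd h.symm (ne_of_lt (Real.rpow_lt_rpow hb hgt hp))

/-- The Hadamard combinatorial step: if all the `ℓ_p` sums of distances are equal,
then coordinatewise `‖x k - u‖ ^ p = ‖x k + u‖ ^ p`. -/
lemma partA {n : ℕ} (hn : 1 ≤ n) (H : Matrix (Fin n) (Fin n) ℝ)
    (hpm : ∀ i j, H i j = 1 ∨ H i j = -1)
    (horth : ∀ k l : Fin n, (∑ i, H i k * H i l) = if k = l then (n : ℝ) else 0)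
    (hnorm : ∀ i : Fin n, H i ⟨0, hn⟩ = 1)
    {X : Type*} [NormedAddCommGroup X] [NormedSpace ℝ X]
    (p : ℝ) (u : X) (x : Fin (n - 1) → X) (S : ℝ)
    (J : Fin (n - 1) → Fin n) (hJ : ∀ j : Fin (n - 1), (J j : ℕ) = (j : ℕ) + 1)
    (hS : ∀ i : Fin n, (∑ j : Fin (n - 1), ‖x j - H i (J j) • u‖ ^ p) = S)
    (k : Fin (n - 1)) :
    ‖x k - u‖ ^ p = ‖x k + u‖ ^ p := by
  classical
  have hk'0 : J k ≠ ⟨0, hn⟩ := by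
    intro h
    have := congrArg (fun z : Fin n => (z : ℕ)) h
    simp [hJ k] at this
  have hcol : (∑ i, H i (J k)) = 0 := by
    have h := horth (J k) ⟨0, hn⟩
    rw [if_neg hk'0] at h
    calc (∑ i, H i (J k)) = ∑ i, H i (J k) * H i ⟨0, hn⟩ := by
          apply Finset.sum_congr rfl
          intro i _
          rw [hnorm i, mul_one]
      _ = 0 := h
  have hpoint : ∀ (i : Fin n) (j : Fin (n - 1)),
      ‖x j - H i (J j) • u‖ ^ p
        = (‖x j - u‖ ^ p + ‖x j + u‖ ^ p) / 2
          + H i (J j) * ((‖x j - u‖ ^ p - ‖x j + u‖ ^ p) / 2) := by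
    intro i j
    rcases hpm i (J j) with h | h <;> rw [h]
    · rw [one_smul]; ring
    · rw [neg_one_smul, sub_neg_eq_add]; ring
  have step1 : ∀ i : Fin n,
      H i (J k) * (∑ j, ‖x j - H i (J j) • u‖ ^ p)
        = ∑ j, (((‖x j - u‖ ^ p + ‖x j + u‖ ^ p) / 2) * H i (J k)
            + ((‖x j - u‖ ^ p - ‖x j + u‖ ^ p) / 2) * (H i (J k) * H i (J j))) := by
    intro i
    rw [Finset.mul_sum]
    apply Finset.sum_congr rfl
    intro j _
    rw [hpoint i j]
    ring
  have hJinj : ∀ j : Fin (n - 1), J j = J k → j = k := by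
    intro j h
    have := congrArg (fun z : Fin n => (z : ℕ)) h
    simp only [hJ j, hJ k] at this
    exact Fin.ext (by omega)
  have step2 : (∑ i, H i (J k) * (∑ j, ‖x j - H i (J j) • u‖ ^ p))
      = ((‖x k - u‖ ^ p - ‖x k + u‖ ^ p) / 2) * (n : ℝ) := by
    calc (∑ i, H i (J k) * (∑ j, ‖x j - H i (J j) • u‖ ^ p))
        = ∑ i, ∑ j, (((‖x j - u‖ ^ p + ‖x j + u‖ ^ p) / 2) * H i (J k)
            + ((‖x j - u‖ ^ p - ‖x j + u‖ ^ p) / 2) * (H i (J k) * H i (J j))) := by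
          exact Finset.sum_congr rfl fun i _ => step1 i
      _ = ∑ j, ∑ i, (((‖x j - u‖ ^ p + ‖x j + u‖ ^ p) / 2) * H i (J k)
            + ((‖x j - u‖ ^ p - ‖x j + u‖ ^ p) / 2) * (H i (J k) * H i (J j))) :=
          Finset.sum_comm
      _ = ∑ j, (((‖x j - u‖ ^ p + ‖x j + u‖ ^ p) / 2) * (∑ i, H i (J k))
            + ((‖x j - u‖ ^ p - ‖x j + u‖ ^ p) / 2) * (∑ i, H i (J k) * H i (J j))) := by
          apply Finset.sum_congr rfl
          intro j _
          rw [Finset.sum_add_distrib, ← Finset.mul_sum, ← Finset.mul_sum]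
      _ = ∑ j, (((‖x j - u‖ ^ p - ‖x j + u‖ ^ p) / 2)
            * (if J k = J j then (n : ℝ) else 0)) := by
          apply Finset.sum_congr rfl
          intro j _
          rw [hcol, mul_zero, zero_add, horth (J k) (J j)]
      _ = ((‖x k - u‖ ^ p - ‖x k + u‖ ^ p) / 2) * (n : ℝ) := by
          rw [Finset.sum_eq_single k]
          · rw [if_pos rfl]
          · intro j _ hjk
            rw [if_neg, mul_zero]
            intro h
            exact hjk (hJinj j h.symm)
          · intro h
            exact absurd (Finset.mem_univ k) h
  have hzero : ((‖x k - u‖ ^ p - ‖x k + u‖ ^ p) / 2) * (n : ℝ) = 0 := by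
    rw [← step2]
    calc (∑ i, H i (J k) * (∑ j, ‖x j - H i (J j) • u‖ ^ p))
        = ∑ i, H i (J k) * S := by
          apply Finset.sum_congr rfl
          intro i _
          rw [hS i]
      _ = (∑ i, H i (J k)) * S := by rw [Finset.sum_mul]
      _ = 0 := by rw [hcol, zero_mul]
  have hn0 : ((n : ℝ)) ≠ 0 := Nat.cast_ne_zero.mpr (by omega)
  have := mul_eq_zero.mp hzero
  rcases this with h | h
  · linarith [h]
  · exact absurd h hn0

/-- Let `h_1, …, h_n ∈ ℝ^{n−1}` be a Hadamard simplex (the rows of a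
normalised Hadamard matrix `H` of order `n ≥ 1` with the initial `1` deleted:
`h_i j = H i (j+1)`), and `p ∈ [1, ∞)`. Let `u, v` be linearly independent unit vectors
in a strictly convex 2-dimensional normed space `X`. If `x = (x_1, …, x_{n−1})` in the
`ℓ_p`-sum of `n−1` copies of `X` has the same distance `c₁` to each point `h_i ⊗ u`
and the same distance `c₂` to each point `h_i ⊗ v`, then `x = 0`. -/
theorem statement15 (n : ℕ) (hn : 1 ≤ n)
    (H : Matrix (Fin n) (Fin n) ℝ) (hHad : IsHadamardMatrix H)
    (hnorm : ∀ i : Fin n, H i ⟨0, hn⟩ = 1)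
    (p : ℝ) (hp : 1 ≤ p)
    (X : Type*) [NormedAddCommGroup X] [NormedSpace ℝ X]
    [StrictConvexSpace ℝ X] (hdim : Module.finrank ℝ X = 2)
    (u v : X) (hu : ‖u‖ = 1) (hv : ‖v‖ = 1) (huv : LinearIndependent ℝ ![u, v])
    (x : Fin (n - 1) → X) (c₁ c₂ : ℝ)
    (hdist₁ : ∀ i : Fin n,
      (∑ j : Fin (n - 1),
          ‖x j - H i ⟨(j : ℕ) + 1, by have := j.isLt; omega⟩ • u‖ ^ p) ^ (1 / p) = c₁)
    (hdist₂ : ∀ i : Fin n,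
      (∑ j : Fin (n - 1),
          ‖x j - H i ⟨(j : ℕ) + 1, by have := j.isLt; omega⟩ • v‖ ^ p) ^ (1 / p) = c₂) :
    ∀ j : Fin (n - 1), x j = 0 := by
  classical
  have hp0 : p ≠ 0 := by intro h; rw [h] at hp; linarith
  have hppos : 0 < p := by linarith
  obtain ⟨hpm, hHHt⟩ := hHad
  have hn0 : ((n : ℝ)) ≠ 0 := Nat.cast_ne_zero.mpr (by omega)
  -- transpose orthogonality
  have hinv : H * ((n : ℝ)⁻¹ • H.transpose) = 1 := by
    rw [Matrix.mul_smul, hHHt, smul_smul, inv_mul_cancel₀ hn0, one_smul]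
  have hinv' : ((n : ℝ)⁻¹ • H.transpose) * H = 1 := mul_eq_one_comm.mp hinv
  have hHtH : H.transpose * H = (n : ℝ) • (1 : Matrix (Fin n) (Fin n) ℝ) := by
    have h := congrArg (fun M : Matrix (Fin n) (Fin n) ℝ => (n : ℝ) • M) hinv'
    simp only [Matrix.smul_mul, smul_smul, mul_inv_cancel₀ hn0, one_smul] at h
    exact h
  have horth : ∀ k l : Fin n, (∑ i, H i k * H i l) = if k = l then (n : ℝ) else 0 := by
    intro k l
    have h := congrFun (congrFun hHtH k) l
    simp only [Matrix.mul_apply, Matrix.transpose_apply, Matrix.smul_apply,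
      Matrix.one_apply, smul_eq_mul, mul_ite, mul_one, mul_zero] at h
    exact h
  -- the index map
  set J : Fin (n - 1) → Fin n := fun j => ⟨(j : ℕ) + 1, by have := j.isLt; omega⟩ with hJdef
  have hJ : ∀ j : Fin (n - 1), (J j : ℕ) = (j : ℕ) + 1 := fun j => rfl
  -- constant sums
  have hsum1 : ∀ i : Fin n, (∑ j : Fin (n - 1), ‖x j - H i (J j) • u‖ ^ p) = c₁ ^ p := by
    intro i
    have hnn : (0:ℝ) ≤ ∑ j : Fin (n - 1), ‖x j - H i (J j) • u‖ ^ p :=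
      Finset.sum_nonneg fun j _ => Real.rpow_nonneg (norm_nonneg _) p
    have hd : (∑ j : Fin (n - 1), ‖x j - H i (J j) • u‖ ^ p) ^ (1 / p) = c₁ := hdist₁ i
    calc (∑ j : Fin (n - 1), ‖x j - H i (J j) • u‖ ^ p)
        = ((∑ j : Fin (n - 1), ‖x j - H i (J j) • u‖ ^ p) ^ (1 / p)) ^ p := by
          rw [← Real.rpow_mul hnn, one_div_mul_cancel hp0, Real.rpow_one]
      _ = c₁ ^ p := by rw [hd]
  have hsum2 : ∀ i : Fin n, (∑ j : Fin (n - 1), ‖x j - H i (J j) • v‖ ^ p) = c₂ ^ p := by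
    intro i
    have hnn : (0:ℝ) ≤ ∑ j : Fin (n - 1), ‖x j - H i (J j) • v‖ ^ p :=
      Finset.sum_nonneg fun j _ => Real.rpow_nonneg (norm_nonneg _) p
    have hd : (∑ j : Fin (n - 1), ‖x j - H i (J j) • v‖ ^ p) ^ (1 / p) = c₂ := hdist₂ i
    calc (∑ j : Fin (n - 1), ‖x j - H i (J j) • v‖ ^ p)
        = ((∑ j : Fin (n - 1), ‖x j - H i (J j) • v‖ ^ p) ^ (1 / p)) ^ p := by
          rw [← Real.rpow_mul hnn, one_div_mul_cancel hp0, Real.rpow_one]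
      _ = c₂ ^ p := by rw [hd]
  intro j
  have hb1 : ‖x j - u‖ = ‖x j + u‖ := by
    have h := partA hn H hpm horth hnorm p u x (c₁ ^ p) J hJ hsum1 j
    exact rpow_inj_of_nonneg (norm_nonneg _) (norm_nonneg _) hppos h
  have hb2 : ‖x j - v‖ = ‖x j + v‖ := by
    have h := partA hn H hpm horth hnorm p v x (c₂ ^ p) J hJ hsum2 j
    exact rpow_inj_of_nonneg (norm_nonneg _) (norm_nonneg _) hppos h
  exact key_lemma hdim u v hu hv huv (x j) hb1 hb2
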